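/- Let n, s be positive integers and h a natural number with 1 ≤ s ≤ n−2, gcd(s, n) = 1, and 0 ≤ h ≤ n−1. Then there exists an s-overlap cycle for W(n,h), the set of weak order words of length n with height h. -/

import Mathlib

/-- `W(n,h)`: the set of weak order words of length `n` with height exactly `h`,
i.e. words whose set of letters is exactly `{0, 1, …, h}`. -/
def heightWeakOrders (n h : ℕ) : Set (List ℕ) :=
  {w | w.length = n ∧ w.toFinset = Finset.range (h + 1)}

/-- `IsOCycle s N C f` says `f 0, f 1, …, f (N-1)` is an `s`-overlap cycle for the
set `C` of strings: it is a cyclic ordering of all elements of `C` (each occurring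
exactly once) in which the last `s` letters of each word equal the first `s`
letters of the cyclically next word. -/
def IsOCycle (s N : ℕ) (C : Set (List ℕ)) (f : ℕ → List ℕ) : Prop :=
  (∀ i < N, f i ∈ C) ∧
    (∀ c ∈ C, ∃! i, i < N ∧ f i = c) ∧
    ∀ i < N, (f i).drop ((f i).length - s) = (f ((i + 1) % N)).take s

namespace OCP

/-- The overlap relation between two words. -/
def Ov (s : ℕ) (a b : List ℕ) : Prop := a.drop (a.length - s) = b.take s

/-- A cyclic chain of overlaps. -/
def CycOv (s : ℕ) (L : List (List ℕ)) : Prop :=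
  List.IsChain (Ov s) L ∧ ∀ x ∈ L.getLast?, ∀ y ∈ L.head?, Ov s x y

lemma cycOv_append_comm {s : ℕ} {A B : List (List ℕ)} (h : CycOv s (A ++ B)) :
    CycOv s (B ++ A) := by
  rcases A with _ | ⟨a, A⟩
  · simpa using h
  rcases B with _ | ⟨b, B⟩
  · simpa using h
  obtain ⟨hch, hwrap⟩ := h
  rw [List.isChain_append] at hch
  obtain ⟨c1, c2, c3⟩ := hch
  have e1 : ((a :: A) ++ (b :: B)).getLast? = (b :: B).getLast? := by
    rw [List.getLast?_append, List.getLast?_eq_getLast (l := b :: B) (by simp)]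
    rfl
  have e2 : ((a :: A) ++ (b :: B)).head? = some a := by simp
  have e3 : ((b :: B) ++ (a :: A)).getLast? = (a :: A).getLast? := by
    rw [List.getLast?_append, List.getLast?_eq_getLast (l := a :: A) (by simp)]
    rfl
  constructor
  · rw [List.isChain_append]
    refine ⟨c2, c1, ?_⟩
    intro x hx y hy
    obtain rfl : a = y := by simpa using hy
    exact hwrap x (by rw [e1]; exact hx) a (by rw [e2]; rfl)
  · intro x hx y hy
    rw [e3] at hx
    obtain rfl : b = y := by simpa using hy
    exact c3 x hx b (by simp)

lemma cycOv_splice {s : ℕ} {A B : List (List ℕ)} {la lb : List ℕ}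
    (hA : CycOv s A) (hB : CycOv s B) (hla : A.getLast? = some la)
    (hlb : B.getLast? = some lb)
    (hsuf : la.drop (la.length - s) = lb.drop (lb.length - s)) :
    CycOv s (A ++ B) := by
  have hA0 : A ≠ [] := by rintro rfl; simp at hla
  have hB0 : B ≠ [] := by rintro rfl; simp at hlb
  constructor
  · rw [List.isChain_append]
    refine ⟨hA.1, hB.1, ?_⟩
    intro x hx y hy
    rw [hla] at hx
    obtain rfl : la = x := by simpa using hx
    have hov := hB.2 lb (by rw [hlb]; rfl) y hy
    unfold Ov at hov ⊢
    rw [hsuf]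
    exact hov
  · intro x hx y hy
    have e : (A ++ B).getLast? = some lb := by
      rw [List.getLast?_append, hlb]; rfl
    have e2 : (A ++ B).head? = A.head? := by
      rcases A with _ | ⟨a, A⟩
      · exact absurd rfl hA0
      · simp
    rw [e] at hx
    obtain rfl : lb = x := by simpa using hx
    rw [e2] at hy
    have hov := hA.2 la (by rw [hla]; rfl) y hy
    unfold Ov at hov ⊢
    rw [← hsuf]
    exact hov

lemma exists_cyc_ending {s : ℕ} {L : List (List ℕ)} (h : CycOv s L) {z : List ℕ}
    (hz : z ∈ L) : ∃ M, CycOv s M ∧ M.Perm L ∧ M.getLast? = some z := by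
  obtain ⟨X, Y, rfl⟩ := List.append_of_mem hz
  refine ⟨Y ++ (X ++ [z]), ?_, ?_, ?_⟩
  · apply cycOv_append_comm
    rw [show (X ++ [z]) ++ Y = X ++ z :: Y by simp]
    exact h
  · rw [show X ++ z :: Y = (X ++ [z]) ++ Y from by simp]
    exact List.perm_append_comm
  · rw [show Y ++ (X ++ [z]) = (Y ++ X) ++ [z] from by simp, List.getLast?_concat]

lemma exists_rotate_inv (w : List ℕ) (k : ℕ) : ∃ m, (w.rotate k).rotate m = w := by
  rcases Nat.eq_zero_or_pos w.length with h0 | hpos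
  · have hw : w = [] := List.length_eq_zero_iff.mp h0
    subst hw
    exact ⟨0, by simp⟩
  · refine ⟨w.length - k % w.length, ?_⟩
    rw [List.rotate_rotate]
    have h1 := Nat.div_add_mod k w.length
    have h2 : k % w.length < w.length := Nat.mod_lt _ hpos
    have h3 : k + (w.length - k % w.length) = w.length * (k / w.length + 1) := by
      rw [Nat.mul_succ]
      set q := w.length * (k / w.length) with hq
      set rem := k % w.length with hrem
      omega
    rw [h3, List.rotate_length_mul]

lemma rotate_append_left (A B : List ℕ) : (A ++ B).rotate A.length = B ++ A := by
  rw [List.rotate_eq_drop_append_take (by simp), List.drop_left, List.take_left]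

lemma perm_toFinset {w w' : List ℕ} (hp : w.Perm w') : w.toFinset = w'.toFinset := by
  ext a
  simp only [List.mem_toFinset]
  exact hp.mem_iff

lemma W_rotate {n h : ℕ} {w : List ℕ} (hw : w ∈ heightWeakOrders n h) (k : ℕ) :
    w.rotate k ∈ heightWeakOrders n h :=
  ⟨by rw [List.length_rotate]; exact hw.1,
   by rw [perm_toFinset (List.rotate_perm w k)]; exact hw.2⟩

lemma W_perm {n h : ℕ} {w w' : List ℕ} (hp : w.Perm w') (hw : w ∈ heightWeakOrders n h) :
    w' ∈ heightWeakOrders n h :=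
  ⟨hp.symm.length_eq.trans hw.1, (perm_toFinset hp.symm).trans hw.2⟩

lemma suf_cons (s : ℕ) (a c : ℕ) (t : List ℕ) (hs : s ≤ t.length) :
    (a :: t).drop ((a :: t).length - s) = (c :: t).drop ((c :: t).length - s) := by
  have h1 : (a :: t).length - s = (t.length - s) + 1 := by
    simp only [List.length_cons]; omega
  have h2 : (c :: t).length - s = (t.length - s) + 1 := by
    simp only [List.length_cons]; omega
  rw [h1, h2, List.drop_succ_cons, List.drop_succ_cons]

lemma suf_cons₂ (s : ℕ) (a b : ℕ) (t : List ℕ) (hs : s ≤ t.length) :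
    (a :: b :: t).drop ((a :: b :: t).length - s)
      = (b :: a :: t).drop ((b :: a :: t).length - s) := by
  have h1 : (a :: b :: t).length - s = (t.length - s) + 2 := by
    simp only [List.length_cons]; omega
  have h2 : (b :: a :: t).length - s = (t.length - s) + 2 := by
    simp only [List.length_cons]; omega
  rw [h1, h2]
  rw [show (t.length - s) + 2 = ((t.length - s) + 1) + 1 from rfl]
  rw [List.drop_succ_cons, List.drop_succ_cons, List.drop_succ_cons, List.drop_succ_cons]

/-- One connectivity step: two words of `W(n,h)` that are rotations of each other
or share the suffix of length `s`. -/
def Step (n s h : ℕ) (w w' : List ℕ) : Prop :=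
  w ∈ heightWeakOrders n h ∧ w' ∈ heightWeakOrders n h ∧
    ((∃ k, w' = w.rotate k) ∨ w.drop (w.length - s) = w'.drop (w'.length - s))

def Join (n s h : ℕ) : List ℕ → List ℕ → Prop := Relation.ReflTransGen (Step n s h)

lemma step_symm (n s h : ℕ) : Symmetric (Step n s h) := by
  rintro w w' ⟨hw, hw', hor⟩
  refine ⟨hw', hw, ?_⟩
  rcases hor with ⟨k, rfl⟩ | hsuf
  · obtain ⟨m, hm⟩ := exists_rotate_inv w k
    exact Or.inl ⟨m, hm.symm⟩
  · exact Or.inr hsuf.symm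

lemma join_swap (n s h : ℕ) (hsn : s + 2 ≤ n) (x y : List ℕ) (a b : ℕ)
    (hw : (x ++ a :: b :: y) ∈ heightWeakOrders n h) :
    Join n s h (x ++ a :: b :: y) (x ++ b :: a :: y) := by
  have hperm : (x ++ a :: b :: y).Perm (x ++ b :: a :: y) :=
    List.Perm.append_left x (List.Perm.swap b a y)
  have hw' : (x ++ b :: a :: y) ∈ heightWeakOrders n h := W_perm hperm hw
  have hlen : (x ++ a :: b :: y).length = n := hw.1
  have hst : s ≤ (y ++ x).length := by
    simp only [List.length_append, List.length_cons] at hlen ⊢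
    omega
  have hv1 : (x ++ a :: b :: y).rotate x.length = a :: b :: (y ++ x) := by
    rw [rotate_append_left]; simp
  have hv2 : (x ++ b :: a :: y).rotate x.length = b :: a :: (y ++ x) := by
    rw [rotate_append_left]; simp
  have hm1 : a :: b :: (y ++ x) ∈ heightWeakOrders n h := hv1 ▸ W_rotate hw x.length
  have hm2 : b :: a :: (y ++ x) ∈ heightWeakOrders n h := hv2 ▸ W_rotate hw' x.length
  have s1 : Step n s h (x ++ a :: b :: y) (a :: b :: (y ++ x)) :=
    ⟨hw, hm1, Or.inl ⟨x.length, hv1.symm⟩⟩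
  have s2 : Step n s h (a :: b :: (y ++ x)) (b :: a :: (y ++ x)) :=
    ⟨hm1, hm2, Or.inr (suf_cons₂ s a b _ hst)⟩
  have s3 : Step n s h (b :: a :: (y ++ x)) (x ++ b :: a :: y) := by
    obtain ⟨m, hm⟩ := exists_rotate_inv (x ++ b :: a :: y) x.length
    refine ⟨hm2, hw', Or.inl ⟨m, ?_⟩⟩
    rw [← hv2]
    exact hm.symm
  exact Relation.ReflTransGen.head s1 (Relation.ReflTransGen.head s2
    (Relation.ReflTransGen.head s3 Relation.ReflTransGen.refl))

lemma join_change (n s h : ℕ) (hsn : s + 2 ≤ n) (x y : List ℕ) (a c : ℕ)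
    (hw : (x ++ a :: y) ∈ heightWeakOrders n h)
    (hw' : (x ++ c :: y) ∈ heightWeakOrders n h) :
    Join n s h (x ++ a :: y) (x ++ c :: y) := by
  have hlen : (x ++ a :: y).length = n := hw.1
  have hst : s ≤ (y ++ x).length := by
    simp only [List.length_append, List.length_cons] at hlen ⊢
    omega
  have hv1 : (x ++ a :: y).rotate x.length = a :: (y ++ x) := by
    rw [rotate_append_left]; simp
  have hv2 : (x ++ c :: y).rotate x.length = c :: (y ++ x) := by
    rw [rotate_append_left]; simp
  have hm1 : a :: (y ++ x) ∈ heightWeakOrders n h := hv1 ▸ W_rotate hw x.length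
  have hm2 : c :: (y ++ x) ∈ heightWeakOrders n h := hv2 ▸ W_rotate hw' x.length
  have s1 : Step n s h (x ++ a :: y) (a :: (y ++ x)) :=
    ⟨hw, hm1, Or.inl ⟨x.length, hv1.symm⟩⟩
  have s2 : Step n s h (a :: (y ++ x)) (c :: (y ++ x)) :=
    ⟨hm1, hm2, Or.inr (suf_cons s a c _ hst)⟩
  have s3 : Step n s h (c :: (y ++ x)) (x ++ c :: y) := by
    obtain ⟨m, hm⟩ := exists_rotate_inv (x ++ c :: y) x.length
    refine ⟨hm2, hw', Or.inl ⟨m, ?_⟩⟩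
    rw [← hv2]
    exact hm.symm
  exact Relation.ReflTransGen.head s1 (Relation.ReflTransGen.head s2
    (Relation.ReflTransGen.head s3 Relation.ReflTransGen.refl))

lemma join_perm (n s h : ℕ) (hsn : s + 2 ≤ n) :
    ∀ {l l' : List ℕ}, l.Perm l' → ∀ x, (x ++ l) ∈ heightWeakOrders n h →
      Join n s h (x ++ l) (x ++ l') := by
  intro l l' hp
  induction hp with
  | nil => intro x _; exact Relation.ReflTransGen.refl
  | @cons a l₁ l₂ _ ih =>
      intro x hm
      have h2 := ih (x ++ [a]) (by simpa [List.append_assoc] using hm)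
      simpa [List.append_assoc] using h2
  | @swap u v l =>
      intro x hm
      exact join_swap n s h hsn x l v u hm
  | @trans l₁ l₂ l₃ h12 h23 ih1 ih2 =>
      intro x hm
      have hm2 : (x ++ l₂) ∈ heightWeakOrders n h := W_perm (List.Perm.append_left x h12) hm
      exact (ih1 x hm).trans (ih2 x hm2)

/-- The canonical word in `W(n,h)`. -/
def canon (n h : ℕ) : List ℕ := List.range (h + 1) ++ List.replicate (n - (h + 1)) 0

lemma canon_mem (n h : ℕ) (hh1 : h + 1 ≤ n) : canon n h ∈ heightWeakOrders n h := by
  constructor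
  · simp only [canon, List.length_append, List.length_range, List.length_replicate]
    omega
  · ext b
    simp only [canon, List.mem_toFinset, List.mem_append, List.mem_range,
      List.mem_replicate, Finset.mem_range]
    omega

lemma count_range (a m : ℕ) : List.count a (List.range m) = if a < m then 1 else 0 := by
  by_cases hm : a < m
  · rw [if_pos hm]
    exact List.count_eq_one_of_mem List.nodup_range (List.mem_range.mpr hm)
  · rw [if_neg hm]
    exact List.count_eq_zero_of_not_mem (by simpa using hm)

lemma count_canon (n h : ℕ) (a : ℕ) :
    List.count a (canon n h)
      = (if a < h + 1 then 1 else 0) + (if a = 0 then n - (h + 1) else 0) := by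
  rw [canon, List.count_append, count_range, List.count_replicate]
  congr 1
  by_cases ha : a = 0
  · subst ha; simp
  · simp [ha, Ne.symm ha]

lemma count_zero_eq {n h : ℕ} {w : List ℕ} (hw : w ∈ heightWeakOrders n h)
    (hdup : ∀ a, a ≠ 0 → List.count a w ≤ 1) : List.count 0 w = n - h := by
  have hsum : ∑ a ∈ w.toFinset, List.count a w = n := by
    have h0 := Multiset.toFinset_sum_count_eq (w : Multiset ℕ)
    have hms : ∑ a ∈ w.toFinset, List.count a w = w.length := by simpa using h0
    rw [hw.1] at hms
    exact hms
  rw [hw.2] at hsum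
  have h0 : (0 : ℕ) ∈ Finset.range (h + 1) := Finset.mem_range.mpr (by omega)
  rw [← Finset.insert_erase h0, Finset.sum_insert (Finset.notMem_erase _ _)] at hsum
  have hone : ∀ a ∈ (Finset.range (h + 1)).erase 0, List.count a w = 1 := by
    intro a ha
    have ha0 : a ≠ 0 := Finset.ne_of_mem_erase ha
    have haw : a ∈ w := by
      rw [← List.mem_toFinset, hw.2]
      exact Finset.mem_of_mem_erase ha
    have h1 : 0 < List.count a w := List.count_pos_iff.mpr haw
    have h2 := hdup a ha0
    omega
  rw [Finset.sum_congr rfl hone, Finset.sum_const, Finset.card_erase_of_mem h0,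
    Finset.card_range, smul_eq_mul, mul_one] at hsum
  omega

lemma join_canon (n s h : ℕ) (hsn : s + 2 ≤ n) (hh1 : h + 1 ≤ n) :
    ∀ (m : ℕ) (w : List ℕ), w ∈ heightWeakOrders n h → n - List.count 0 w ≤ m →
      Join n s h w (canon n h) := by
  intro m
  induction m with
  | zero =>
      intro w hw hm
      have hlen := hw.1
      have hcle := List.count_le_length (a := 0) (l := w)
      have hcnt : List.count 0 w = w.length := by omega
      have hall : ∀ b ∈ w, 0 = b := List.count_eq_length.mp hcnt
      have hrep : w = List.replicate n 0 :=
        List.eq_replicate_iff.mpr ⟨hlen, fun b hb => (hall b hb).symm⟩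
      have hh0 : h = 0 := by
        by_contra hne
        have h1mem : (1 : ℕ) ∈ Finset.range (h + 1) := Finset.mem_range.mpr (by omega)
        rw [← hw.2] at h1mem
        have := hall 1 (List.mem_toFinset.mp h1mem)
        omega
      subst hh0
      have hc : canon n 0 = List.replicate n 0 := by
        have hn1 : n - 1 + 1 = n := by omega
        rw [show canon n 0 = [0] ++ List.replicate (n - 1) 0 from by
          simp [canon, List.range_succ], ← hn1, List.replicate_succ]
        rfl
      rw [hrep, hc]
      exact Relation.ReflTransGen.refl
  | succ m ih =>
      intro w hw hm
      by_cases hdup : ∃ a, a ≠ 0 ∧ 2 ≤ List.count a w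
      · obtain ⟨a, ha0, ha2⟩ := hdup
        have hmem : a ∈ w := List.count_pos_iff.mp (by omega)
        obtain ⟨x, y, rfl⟩ := List.append_of_mem hmem
        have he : List.count a (x ++ a :: y) = List.count a x + List.count a y + 1 := by
          rw [List.count_append, List.count_cons_self]
          omega
        have haxy : a ∈ x ∨ a ∈ y := by
          by_contra hcon
          push_neg at hcon
          obtain ⟨h1, h2⟩ := hcon
          rw [List.count_eq_zero_of_not_mem h1, List.count_eq_zero_of_not_mem h2] at he
          omega
        have h0xy : (0 : ℕ) ∈ x ∨ (0 : ℕ) ∈ y := by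
          have h0w : (0 : ℕ) ∈ (x ++ a :: y) := by
            rw [← List.mem_toFinset, hw.2]
            exact Finset.mem_range.mpr (by omega)
          rcases List.mem_append.mp h0w with hx0 | hx0
          · exact Or.inl hx0
          · rcases List.mem_cons.mp hx0 with hx0 | hx0
            · exact absurd hx0.symm ha0
            · exact Or.inr hx0
        have htf : (x ++ 0 :: y).toFinset = (x ++ a :: y).toFinset := by
          ext b
          simp only [List.mem_toFinset, List.mem_append, List.mem_cons]
          constructor
          · rintro (hb | rfl | hb)
            · exact Or.inl hb
            · rcases h0xy with hh | hh
              · exact Or.inl hh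
              · exact Or.inr (Or.inr hh)
            · exact Or.inr (Or.inr hb)
          · rintro (hb | rfl | hb)
            · exact Or.inl hb
            · rcases haxy with hh | hh
              · exact Or.inl hh
              · exact Or.inr (Or.inr hh)
            · exact Or.inr (Or.inr hb)
        have hw' : (x ++ 0 :: y) ∈ heightWeakOrders n h := by
          refine ⟨?_, htf.trans hw.2⟩
          have h1 := hw.1
          simp only [List.length_append, List.length_cons] at h1 ⊢
          omega
        have hj : Join n s h (x ++ a :: y) (x ++ 0 :: y) :=
          join_change n s h hsn x y a 0 hw hw'
        have e1 : List.count 0 (x ++ a :: y) = List.count 0 x + List.count 0 y := by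
          rw [List.count_append, List.count_cons_of_ne ha0]
        have e2 : List.count 0 (x ++ 0 :: y) = List.count 0 x + List.count 0 y + 1 := by
          rw [List.count_append, List.count_cons_self]
          omega
        exact hj.trans (ih (x ++ 0 :: y) hw' (by omega))
      · push_neg at hdup
        have hdup' : ∀ a, a ≠ 0 → List.count a w ≤ 1 := by
          intro a ha
          have := hdup a ha
          omega
        have hcz : List.count 0 w = n - h := count_zero_eq hw hdup'
        have hperm : w.Perm (canon n h) := by
          rw [List.perm_iff_count]
          intro a
          rw [count_canon]
          by_cases ha0 : a = 0
          · subst ha0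
            rw [if_pos (by omega), if_pos rfl]
            omega
          · by_cases hah : a < h + 1
            · rw [if_pos hah, if_neg ha0]
              have haw : a ∈ w := by
                rw [← List.mem_toFinset, hw.2]
                exact Finset.mem_range.mpr hah
              have h1 : 0 < List.count a w := List.count_pos_iff.mpr haw
              have h2 := hdup' a ha0
              omega
            · rw [if_neg hah, if_neg ha0]
              have haw : a ∉ w := by
                intro hc
                have := List.mem_toFinset.mpr hc
                rw [hw.2] at this
                exact hah (Finset.mem_range.mp this)
              simp [List.count_eq_zero_of_not_mem haw]
        have hj := join_perm n s h hsn hperm [] (by simpa using hw)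
        simpa using hj

lemma connect (n s h : ℕ) (hsn : s + 2 ≤ n) (hh1 : h + 1 ≤ n) {u v : List ℕ}
    (hu : u ∈ heightWeakOrders n h) (hv : v ∈ heightWeakOrders n h) :
    Join n s h u v := by
  have h1 : Join n s h u (canon n h) :=
    join_canon n s h hsn hh1 n u hu (by omega)
  have h2 : Join n s h v (canon n h) :=
    join_canon n s h hsn hh1 n v hv (by omega)
  haveI : Std.Symm (Step n s h) := ⟨fun a b hab => step_symm n s h hab⟩
  exact h1.trans (Std.Symm.symm (r := Relation.ReflTransGen (Step n s h)) _ _ h2)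

lemma first_exit {n s h : ℕ} (P : List ℕ → Prop)
    (hclosed : ∀ x, P x → ∀ k, P (x.rotate k)) :
    ∀ {d w : List ℕ}, Join n s h d w → P d → ¬ P w →
      ∃ u v, P u ∧ ¬ P v ∧ v ∈ heightWeakOrders n h ∧
        u.drop (u.length - s) = v.drop (v.length - s) := by
  intro d w hJ
  induction hJ with
  | refl => intro hd hw; exact absurd hd hw
  | @tail b c hdb hbc ih =>
      intro hd hc
      by_cases hb : P b
      · obtain ⟨hbW, hcW, hor⟩ := hbc
        rcases hor with ⟨k, rfl⟩ | hsuf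
        · exact absurd (hclosed b hb k) hc
        · exact ⟨b, c, hb, hc, hcW, hsuf⟩
      · exact ih hd hb

lemma exists_mul_mod (r n k : ℕ) (hn : 0 < n) (hco : Nat.gcd r n = 1) :
    ∃ m, (m * r) % n = k % n := by
  haveI : NeZero n := ⟨hn.ne'⟩
  have hu : IsUnit (r : ZMod n) := (ZMod.isUnit_iff_coprime r n).mpr hco
  obtain ⟨u, hu'⟩ := hu
  set b : ZMod n := (↑u⁻¹ : ZMod n) * (k : ZMod n) with hb
  have hm : ((b.val : ℕ) : ZMod n) = b := ZMod.natCast_rightInverse b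
  refine ⟨b.val, ?_⟩
  have hcast : ((b.val * r : ℕ) : ZMod n) = ((k : ℕ) : ZMod n) := by
    push_cast
    rw [hm, hb, ← hu', mul_comm ((↑u⁻¹ : ZMod n)) ((k : ℕ) : ZMod n), mul_assoc,
      Units.inv_mul, mul_one]
  exact (ZMod.natCast_eq_natCast_iff _ _ _).mp hcast

lemma closure_all {n s h : ℕ} (hn : 0 < n) (hs : s < n) (hgcd : Nat.gcd s n = 1)
    (L : List (List ℕ)) (hsub : ∀ x ∈ L, x ∈ heightWeakOrders n h)
    (hc : ∀ x ∈ L, x.rotate (n - s) ∈ L) :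
    ∀ x ∈ L, ∀ k, x.rotate k ∈ L := by
  have hco : Nat.gcd (n - s) n = 1 := by
    have d1 : Nat.gcd (n - s) n ∣ n := Nat.gcd_dvd_right _ _
    have d2 : Nat.gcd (n - s) n ∣ n - s := Nat.gcd_dvd_left _ _
    have h1 : Nat.gcd (n - s) n ∣ s := by
      have hd := Nat.dvd_sub d1 d2
      rwa [Nat.sub_sub_self hs.le] at hd
    have h2 : Nat.gcd (n - s) n ∣ Nat.gcd s n := Nat.dvd_gcd h1 (Nat.gcd_dvd_right _ _)
    rw [hgcd] at h2
    exact Nat.dvd_one.mp h2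
  have hiter : ∀ (m : ℕ), ∀ x ∈ L, x.rotate (m * (n - s)) ∈ L := by
    intro m
    induction m with
    | zero => intro x hx; simpa using hx
    | succ m ih =>
        intro x hx
        have hxx := hc _ (ih x hx)
        rwa [List.rotate_rotate, show m * (n - s) + (n - s) = (m + 1) * (n - s) by ring] at hxx
  intro x hx k
  obtain ⟨m, hm⟩ := exists_mul_mod (n - s) n k hn hco
  have hxl : x.length = n := (hsub x hx).1
  have heq : x.rotate k = x.rotate (m * (n - s)) := by
    rw [← List.rotate_mod x k, ← List.rotate_mod x (m * (n - s)), hxl, hm]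
  rw [heq]
  exact hiter m x hx

lemma ov_rotate {n s : ℕ} (hs1 : 1 ≤ s) (hsn : s < n) {v : List ℕ} (hv : v.length = n) :
    Ov s v (v.rotate (n - s)) := by
  show v.drop (v.length - s) = (v.rotate (n - s)).take s
  rw [List.rotate_eq_drop_append_take (by omega : n - s ≤ v.length)]
  rw [List.take_left' (by rw [List.length_drop, hv]; omega)]
  rw [hv]

lemma orbit_cycle (n s : ℕ) (hn : 0 < n) (hs1 : 1 ≤ s) (hsn : s < n)
    (w : List ℕ) (hw : w.length = n) :
    ∃ O : List (List ℕ), O ≠ [] ∧ O.Nodup ∧ w ∈ O ∧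
      (∀ x ∈ O, ∃ k, x = w.rotate k) ∧ (∀ x ∈ O, x.rotate (n - s) ∈ O) ∧
      CycOv s O := by
  set r := n - s with hr
  set ρ := fun v : List ℕ => v.rotate r with hρ
  have hiter : ∀ (k : ℕ) (v : List ℕ), ρ^[k] v = v.rotate (k * r) := by
    intro k
    induction k with
    | zero => intro v; simp
    | succ k ih =>
        intro v
        rw [Function.iterate_succ_apply, ih (ρ v)]
        show (v.rotate r).rotate (k * r) = v.rotate ((k + 1) * r)
        rw [List.rotate_rotate, show r + k * r = (k + 1) * r by ring]
  have hper : Function.IsPeriodicPt ρ n w := by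
    show ρ^[n] w = w
    rw [hiter, ← hw, List.rotate_length_mul]
  have hmem : w ∈ Function.periodicPts ρ := Function.mk_mem_periodicPts hn hper
  set p := Function.minimalPeriod ρ w with hp
  have hppos : 0 < p := Function.minimalPeriod_pos_of_mem_periodicPts hmem
  have hpfix : ρ^[p] w = w := Function.iterate_minimalPeriod
  obtain ⟨p', hp'⟩ := Nat.exists_eq_succ_of_ne_zero hppos.ne'
  have hp2 : p = p' + 1 := hp'
  have hlenk : ∀ k, (ρ^[k] w).length = n := by
    intro k
    rw [hiter]
    rw [List.length_rotate, hw]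
  refine ⟨(List.range p).map (fun k => ρ^[k] w), ?_, ?_, ?_, ?_, ?_, ?_⟩
  · apply List.ne_nil_of_length_pos
    simpa using hppos
  · refine List.Nodup.map_on ?_ List.nodup_range
    intro i hi j hj hf
    exact Function.iterate_injOn_Iio_minimalPeriod
      (by simpa using List.mem_range.mp hi) (by simpa using List.mem_range.mp hj) hf
  · exact List.mem_map.mpr ⟨0, List.mem_range.mpr hppos, by simp⟩
  · rintro x hx
    obtain ⟨k, hk, rfl⟩ := List.mem_map.mp hx
    exact ⟨k * r, (hiter k w)⟩
  · rintro x hx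
    obtain ⟨k, hk, rfl⟩ := List.mem_map.mp hx
    have hstep : (ρ^[k] w).rotate r = ρ^[k + 1] w := (Function.iterate_succ_apply' ρ k w).symm
    rw [hstep]
    rcases eq_or_lt_of_le (Nat.succ_le_of_lt (List.mem_range.mp hk)) with heq | hlt
    · have heq' : k + 1 = p := heq
      rw [heq', hpfix]
      exact List.mem_map.mpr ⟨0, List.mem_range.mpr hppos, by simp⟩
    · have hlt' : k + 1 < p := hlt
      exact List.mem_map.mpr ⟨k + 1, List.mem_range.mpr hlt', rfl⟩
  · constructor
    · rw [List.isChain_map, hp2, List.isChain_range_succ]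
      intro m hm
      have hstep : ρ^[m.succ] w = (ρ^[m] w).rotate r := Function.iterate_succ_apply' ρ m w
      rw [hstep]
      exact ov_rotate hs1 hsn (hlenk m)
    · intro x hx y hy
      have hlast : ((List.range p).map (fun k => ρ^[k] w)).getLast? = some (ρ^[p'] w) := by
        rw [hp2, List.range_succ, List.map_append, List.map_cons, List.map_nil,
          List.getLast?_concat]
      have hhead : ((List.range p).map (fun k => ρ^[k] w)).head? = some w := by
        rw [hp2, List.range_succ_eq_map]
        simp
      rw [hlast] at hx
      rw [hhead] at hy
      obtain rfl : ρ^[p'] w = x := by simpa using hx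
      obtain rfl : w = y := by simpa using hy
      have hwr : w = (ρ^[p'] w).rotate r := by
        conv_lhs => rw [← hpfix, hp2, Function.iterate_succ_apply']
      have hov := ov_rotate hs1 hsn (hlenk p')
      rwa [← hwr] at hov

lemma W_finite (n h : ℕ) : (heightWeakOrders n h).Finite := by
  rw [← Set.finite_coe_iff]
  have hbound : ∀ (w : ↥(heightWeakOrders n h)) (i : Fin n), w.val.getD i 0 < h + 1 := by
    intro w i
    have hi : (i : ℕ) < w.val.length := by rw [w.prop.1]; exact i.2
    rw [List.getD_eq_getElem _ _ hi]
    have hmem : w.val[(i : ℕ)] ∈ w.val := List.getElem_mem _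
    have hmem2 : w.val[(i : ℕ)] ∈ w.val.toFinset := List.mem_toFinset.mpr hmem
    rw [w.prop.2] at hmem2
    simpa using hmem2
  apply Finite.of_injective
    (fun w => (fun i : Fin n => (⟨w.val.getD i 0, hbound w i⟩ : Fin (h + 1))))
  intro w w' hww
  apply Subtype.ext
  apply List.ext_get (by rw [w.prop.1, w'.prop.1])
  intro i h1 h2
  have hval : w.val.getD i 0 = w'.val.getD i 0 :=
    congrArg Fin.val (congrFun hww ⟨i, by rw [← w.prop.1]; exact h1⟩)
  rw [List.getD_eq_getElem _ _ h1, List.getD_eq_getElem _ _ h2] at hval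
  simpa using hval

lemma cycOv_getD {s : ℕ} {L : List (List ℕ)} (h : CycOv s L) {i : ℕ} (hi : i < L.length) :
    Ov s (L.getD i []) (L.getD ((i + 1) % L.length) []) := by
  have hne : L ≠ [] := by rintro rfl; simp at hi
  rcases Nat.lt_or_ge (i + 1) L.length with hlt | hge
  · rw [Nat.mod_eq_of_lt hlt, List.getD_eq_getElem _ _ hi, List.getD_eq_getElem _ _ hlt]
    have hc := List.isChain_iff_getElem.mp h.1 i (by omega)
    simpa using hc
  · have hi1 : i + 1 = L.length := by omega
    have hmod : (i + 1) % L.length = 0 := by rw [hi1, Nat.mod_self]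
    rw [hmod, List.getD_eq_getElem _ _ hi, List.getD_eq_getElem _ _ (by omega : 0 < L.length)]
    have h1 : L.getLast? = some L[i] := by
      rw [List.getLast?_eq_getLast hne, List.getLast_eq_getElem]
      have hidx : L.length - 1 = i := by omega
      simp [hidx]
    have h2 : L.head? = some L[0] := by
      rcases L with _ | ⟨a, tl⟩
      · simp at hi
      · rfl
    exact h.2 _ (by rw [h1]; rfl) _ (by rw [h2]; rfl)

end OCP

/-- For positive integers `n, s` and natural `h` with `1 ≤ s ≤ n - 2`,
`gcd(s,n) = 1` and `h ≤ n - 1`, there exists an `s`-overlap cycle for `W(n,h)`. -/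
theorem exists_ocycle_heightWeakOrders (n s h : ℕ) (hn : 0 < n) (hs1 : 1 ≤ s)
    (hs2 : s ≤ n - 2) (hgcd : Nat.gcd s n = 1) (hh : h ≤ n - 1) :
    ∃ f : ℕ → List ℕ,
      IsOCycle s (Nat.card (heightWeakOrders n h)) (heightWeakOrders n h) f := by
  classical
  have hsn : s + 2 ≤ n := by omega
  have hh1 : h + 1 ≤ n := by omega
  have hfin : (heightWeakOrders n h).Finite := OCP.W_finite n h
  set WF := hfin.toFinset with hWF
  -- main growing induction
  have grow : ∀ (m : ℕ) (L : List (List ℕ)), L ≠ [] → L.Nodup →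
      (∀ x ∈ L, x ∈ heightWeakOrders n h) → (∀ x ∈ L, x.rotate (n - s) ∈ L) →
      OCP.CycOv s L → WF.card ≤ L.length + m →
      ∃ L', L' ≠ [] ∧ L'.Nodup ∧ (∀ x, x ∈ L' ↔ x ∈ heightWeakOrders n h) ∧
        OCP.CycOv s L' := by
    intro m
    induction m with
    | zero =>
        intro L hne hnd hsub hclos hcyc hcard
        by_cases hall : ∀ x ∈ heightWeakOrders n h, x ∈ L
        · exact ⟨L, hne, hnd, fun x => ⟨fun hx => hsub x hx, fun hx => hall x hx⟩, hcyc⟩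
        · push_neg at hall
          obtain ⟨w, hwW, hwL⟩ := hall
          exfalso
          have hsubF : L.toFinset ⊆ WF := by
            intro x hx
            rw [hWF, Set.Finite.mem_toFinset]
            exact hsub x (List.mem_toFinset.mp hx)
          have hss : L.toFinset ⊂ WF := by
            refine (Finset.ssubset_iff_of_subset hsubF).mpr ⟨w, ?_, ?_⟩
            · rw [hWF, Set.Finite.mem_toFinset]; exact hwW
            · simpa using hwL
          have hlt := Finset.card_lt_card hss
          rw [List.toFinset_card_of_nodup hnd] at hlt
          omega
    | succ m ih =>
        intro L hne hnd hsub hclos hcyc hcard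
        by_cases hall : ∀ x ∈ heightWeakOrders n h, x ∈ L
        · exact ⟨L, hne, hnd, fun x => ⟨fun hx => hsub x hx, fun hx => hall x hx⟩, hcyc⟩
        · push_neg at hall
          obtain ⟨w, hwW, hwL⟩ := hall
          have hd : L.head hne ∈ L := List.head_mem hne
          have hdW := hsub _ hd
          have hallrot := OCP.closure_all (by omega) (by omega) hgcd L hsub hclos
          have hJ : OCP.Join n s h (L.head hne) w := OCP.connect n s h hsn hh1 hdW hwW
          obtain ⟨u, v, huL, hvL, hvW, hsuf⟩ :=
            OCP.first_exit (fun z => z ∈ L) (fun x hx k => hallrot x hx k) hJ hd hwL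
          have huW := hsub u huL
          obtain ⟨O, hOne, hOnd, hvO, hOrot, hOclos, hOcyc⟩ :=
            OCP.orbit_cycle n s (by omega) hs1 (by omega) v hvW.1
          have hOW : ∀ x ∈ O, x ∈ heightWeakOrders n h := by
            intro x hx
            obtain ⟨k, rfl⟩ := hOrot x hx
            exact OCP.W_rotate hvW k
          have hdisj : ∀ x ∈ O, x ∉ L := by
            intro x hx hxL
            obtain ⟨k, rfl⟩ := hOrot x hx
            obtain ⟨mm, hmm⟩ := OCP.exists_rotate_inv v k
            have hvnow := hallrot _ hxL mm
            rw [hmm] at hvnow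
            exact hvL hvnow
          obtain ⟨L1, hL1cyc, hL1perm, hL1last⟩ := OCP.exists_cyc_ending hcyc huL
          obtain ⟨O1, hO1cyc, hO1perm, hO1last⟩ := OCP.exists_cyc_ending hOcyc hvO
          have hnew : OCP.CycOv s (L1 ++ O1) :=
            OCP.cycOv_splice hL1cyc hO1cyc hL1last hO1last hsuf
          have hL1ne : L1 ≠ [] := by rintro rfl; simp at hL1last
          have hO1ne : O1 ≠ [] := by rintro rfl; simp at hO1last
          have hL1mem : ∀ x, x ∈ L1 ↔ x ∈ L := fun x => hL1perm.mem_iff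
          have hO1mem : ∀ x, x ∈ O1 ↔ x ∈ O := fun x => hO1perm.mem_iff
          refine ih (L1 ++ O1) (by simp [hL1ne]) ?_ ?_ ?_ hnew ?_
          · refine List.Nodup.append (hL1perm.nodup_iff.mpr hnd) (hO1perm.nodup_iff.mpr hOnd) ?_
            intro a ha1 ha2
            exact hdisj a ((hO1mem a).mp ha2) ((hL1mem a).mp ha1)
          · intro x hx
            rcases List.mem_append.mp hx with hx | hx
            · exact hsub x ((hL1mem x).mp hx)
            · exact hOW x ((hO1mem x).mp hx)
          · intro x hx
            rcases List.mem_append.mp hx with hx | hx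
            · exact List.mem_append.mpr (Or.inl ((hL1mem _).mpr (hclos x ((hL1mem x).mp hx))))
            · exact List.mem_append.mpr (Or.inr ((hO1mem _).mpr (hOclos x ((hO1mem x).mp hx))))
          · have hl1 : L1.length = L.length := hL1perm.length_eq
            have ho1 : O1.length = O.length := hO1perm.length_eq
            have ho1pos : 0 < O1.length := List.length_pos_iff.mpr hO1ne
            rw [List.length_append]
            omega
  -- start with the orbit of the canonical word
  have hcanW : OCP.canon n h ∈ heightWeakOrders n h := OCP.canon_mem n h hh1
  obtain ⟨O₀, hO₀ne, hO₀nd, hcO₀, hO₀rot, hO₀clos, hO₀cyc⟩ :=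
    OCP.orbit_cycle n s (by omega) hs1 (by omega) (OCP.canon n h) hcanW.1
  have hO₀W : ∀ x ∈ O₀, x ∈ heightWeakOrders n h := by
    intro x hx
    obtain ⟨k, rfl⟩ := hO₀rot x hx
    exact OCP.W_rotate hcanW k
  obtain ⟨L, hLne, hLnd, hLiff, hLcyc⟩ :=
    grow WF.card O₀ hO₀ne hO₀nd hO₀W hO₀clos hO₀cyc (by omega)
  have hcard : Nat.card (heightWeakOrders n h) = L.length := by
    have hWeq : heightWeakOrders n h = ↑L.toFinset := by
      ext x
      simp only [Finset.coe_sort_coe, List.coe_toFinset, Set.mem_setOf_eq]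
      exact (hLiff x).symm
    rw [hWeq]
    rw [Nat.card_coe_set_eq, Set.ncard_coe_finset, List.toFinset_card_of_nodup hLnd]
  refine ⟨fun i => L.getD i [], ?_⟩
  rw [hcard]
  refine ⟨?_, ?_, ?_⟩
  · intro i hi
    show L.getD i [] ∈ heightWeakOrders n h
    rw [List.getD_eq_getElem _ _ hi]
    exact (hLiff _).mp (List.getElem_mem _)
  · intro c hc
    have hcL : c ∈ L := (hLiff c).mpr hc
    obtain ⟨i, hi, hgi⟩ := List.mem_iff_getElem.mp hcL
    refine ⟨i, ⟨hi, ?_⟩, ?_⟩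
    · show L.getD i [] = c
      rw [List.getD_eq_getElem _ _ hi]
      exact hgi
    rintro j ⟨hj, hgj⟩
    have hgj' : L.getD j [] = c := hgj
    rw [List.getD_eq_getElem _ _ hj] at hgj'
    have hji : L.get ⟨j, hj⟩ = L.get ⟨i, hi⟩ := by
      simp only [List.get_eq_getElem]
      rw [hgj', hgi]
    exact congrArg Fin.val (List.nodup_iff_injective_get.mp hLnd hji)
  · intro i hi
    exact OCP.cycOv_getD hLcyc hi
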